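/- arXiv:1907.04118 — 3 statements merged into one kernel-verified Lean document; each statement's English description precedes it below -/
import Mathlib

section
/- Let α ∈ ℝ and let f : ℝ → ℝ be a C⁴ function satisfying f''''(z) = f''(z) for every z ∈ ℝ, with f(0) = 0 and f'(0) = 0. If there exists M ≥ 0 such that |f(z) − α·z| ≤ M for all z ≥ 0, then f(z) = α·(exp(−z) + z − 1) for all z ∈ ℝ, and consequently f(z) − α·z converges to −α as z → ∞. -/
open Real Filter Topology

/-- First-order matching at x = 0: a C⁴ solution of f'''' = f'' with clamped
    conditions such that f(z) - α·z is bounded on [0, ∞) equals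
    α·(e^{-z} + z - 1), and f(z) - α·z → -α as z → ∞. -/
theorem stmt_5 (α : ℝ) (f : ℝ → ℝ) (hf : ContDiff ℝ 4 f)
    (hode : ∀ z : ℝ, iteratedDeriv 4 f z = iteratedDeriv 2 f z)
    (h0 : f 0 = 0) (h1 : deriv f 0 = 0)
    (hbdd : ∃ M : ℝ, 0 ≤ M ∧ ∀ z : ℝ, 0 ≤ z → |f z - α * z| ≤ M) :
    (∀ z : ℝ, f z = α * (Real.exp (-z) + z - 1)) ∧
      Filter.Tendsto (fun z => f z - α * z) Filter.atTop (nhds (-α)) := by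
  obtain ⟨M, hM0, hM⟩ := hbdd
  set f1 := deriv f with hf1
  set f2 := deriv f1 with hf2
  set f3 := deriv f2 with hf3
  have hi1 : iteratedDeriv 1 f = f1 := by
    simp [iteratedDeriv_succ, iteratedDeriv_zero, hf1]
  have hi2 : iteratedDeriv 2 f = f2 := by
    rw [show (2:ℕ) = 1 + 1 from rfl, iteratedDeriv_succ, hi1, hf2]
  have hi3 : iteratedDeriv 3 f = f3 := by
    rw [show (3:ℕ) = 2 + 1 from rfl, iteratedDeriv_succ, hi2, hf3]
  have hi4 : iteratedDeriv 4 f = deriv f3 := by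
    rw [show (4:ℕ) = 3 + 1 from rfl, iteratedDeriv_succ, hi3]
  have hdf : Differentiable ℝ f := by
    have := hf.differentiable_iteratedDeriv 0 (by norm_num)
    simpa using this
  have hdf1 : Differentiable ℝ f1 := by
    have := hf.differentiable_iteratedDeriv 1 (by norm_num)
    rwa [hi1] at this
  have hdf2 : Differentiable ℝ f2 := by
    have := hf.differentiable_iteratedDeriv 2 (by norm_num)
    rwa [hi2] at this
  have hdf3 : Differentiable ℝ f3 := by
    have := hf.differentiable_iteratedDeriv 3 (by norm_num)
    rwa [hi3] at this
  have hd0 : ∀ z : ℝ, HasDerivAt f (f1 z) z := fun z => (hdf z).hasDerivAt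
  have hd1 : ∀ z : ℝ, HasDerivAt f1 (f2 z) z := fun z => (hdf1 z).hasDerivAt
  have hd2 : ∀ z : ℝ, HasDerivAt f2 (f3 z) z := fun z => (hdf2 z).hasDerivAt
  have hd3 : ∀ z : ℝ, HasDerivAt f3 (f2 z) z := fun z => by
    have := (hdf3 z).hasDerivAt
    have h4 : deriv f3 z = f2 z := by rw [← hi4, ← hi2]; exact hode z
    rwa [h4] at this
  set c0 := f2 0 with hc0
  set c1 := f3 0 with hc1
  -- Step 1: f3 - f1 is constant, equal to c1
  have hG : ∀ z : ℝ, f3 z - f1 z = c1 := by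
    have hdiff : Differentiable ℝ (fun z => f3 z - f1 z) :=
      fun z => ((hd3 z).sub (hd1 z)).differentiableAt
    have hderiv : ∀ z, deriv (fun z => f3 z - f1 z) z = 0 := fun z => by
      rw [show deriv (fun z => f3 z - f1 z) z = f2 z - f2 z from ((hd3 z).sub (hd1 z)).deriv]; ring
    have := is_const_of_deriv_eq_zero hdiff hderiv
    intro z
    have h := this z 0
    rw [h, h1]
    simp [hc1]
  -- Step 2: f2 z = f z + c0 + c1 * z
  have hc : ∀ z : ℝ, f2 z = f z + c0 + c1 * z := by
    have hdiff : Differentiable ℝ (fun z => f2 z - f z - c1 * z) := fun z => by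
      have hmul : HasDerivAt (fun z : ℝ => c1 * z) c1 z := by
        simpa using (hasDerivAt_id z).const_mul c1
      exact (((hd2 z).sub (hd0 z)).sub hmul).differentiableAt
    have hderiv : ∀ z, deriv (fun z => f2 z - f z - c1 * z) z = 0 := fun z => by
      have hmul : HasDerivAt (fun z : ℝ => c1 * z) c1 z := by
        simpa using (hasDerivAt_id z).const_mul c1
      rw [show deriv (fun z => f2 z - f z - c1 * z) z = f3 z - f1 z - c1 from
        (((hd2 z).sub (hd0 z)).sub hmul).deriv]
      linarith [hG z]
    have := is_const_of_deriv_eq_zero hdiff hderiv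
    intro z
    have h := this z 0
    simp only [mul_zero, sub_zero, h0] at h
    have : f2 z - f z - c1 * z = c0 := by rw [h]
    linarith
  -- Step 3: the exponential combinations are constant
  have hu : ∀ z : ℝ, f1 z + c1 + (f z + c0 + c1 * z) = (c0 + c1) * Real.exp z := by
    have hdu : ∀ z : ℝ, HasDerivAt
        (fun z => Real.exp (-z) * (f1 z + c1 + (f z + c0 + c1 * z)))
        (Real.exp (-z) * (-1) * (f1 z + c1 + (f z + c0 + c1 * z))
          + Real.exp (-z) * (f2 z + (f1 z + c1 * 1))) z := fun z => by
      have he : HasDerivAt (fun z : ℝ => Real.exp (-z)) (Real.exp (-z) * (-1)) z :=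
        (Real.hasDerivAt_exp (-z)).comp z ((hasDerivAt_id z).neg)
      have hin : HasDerivAt (fun z => f1 z + c1 + (f z + c0 + c1 * z))
          (f2 z + (f1 z + c1 * 1)) z := by
        have h2 : HasDerivAt (fun z => f1 z + c1) (f2 z) z := (hd1 z).add_const c1
        have h3 : HasDerivAt (fun z => f z + c0 + c1 * z) (f1 z + c1 * 1) z :=
          ((hd0 z).add_const c0).add ((hasDerivAt_id z).const_mul c1)
        exact h2.add h3
      exact he.mul hin
    have hdiff : Differentiable ℝ
        (fun z => Real.exp (-z) * (f1 z + c1 + (f z + c0 + c1 * z))) :=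
      fun z => (hdu z).differentiableAt
    have hderiv : ∀ z, deriv
        (fun z => Real.exp (-z) * (f1 z + c1 + (f z + c0 + c1 * z))) z = 0 := fun z => by
      rw [(hdu z).deriv]
      linear_combination Real.exp (-z) * (hc z)
    have hconst := is_const_of_deriv_eq_zero hdiff hderiv
    intro z
    have h := hconst z 0
    simp only [neg_zero, Real.exp_zero, one_mul, mul_zero, add_zero, h0, h1] at h
    rw [hf1] at h
    have h' : Real.exp (-z) * (f1 z + c1 + (f z + c0 + c1 * z)) = c0 + c1 := by
      rw [h]; ring
    have hne : Real.exp (-z) ≠ 0 := (Real.exp_pos _).ne'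
    have := congrArg (· * Real.exp z) h'
    rw [mul_comm (Real.exp (-z)), mul_assoc, ← Real.exp_add, neg_add_cancel,
      Real.exp_zero, mul_one] at this
    linarith [this]
  have hv : ∀ z : ℝ, f1 z + c1 - (f z + c0 + c1 * z) = (c1 - c0) * Real.exp (-z) := by
    have hdv : ∀ z : ℝ, HasDerivAt
        (fun z => Real.exp z * (f1 z + c1 - (f z + c0 + c1 * z)))
        (Real.exp z * (f1 z + c1 - (f z + c0 + c1 * z))
          + Real.exp z * (f2 z - (f1 z + c1 * 1))) z := fun z => by
      have he : HasDerivAt Real.exp (Real.exp z) z := Real.hasDerivAt_exp z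
      have hin : HasDerivAt (fun z => f1 z + c1 - (f z + c0 + c1 * z))
          (f2 z - (f1 z + c1 * 1)) z := by
        have h2 : HasDerivAt (fun z => f1 z + c1) (f2 z) z := (hd1 z).add_const c1
        have h3 : HasDerivAt (fun z => f z + c0 + c1 * z) (f1 z + c1 * 1) z :=
          ((hd0 z).add_const c0).add ((hasDerivAt_id z).const_mul c1)
        exact h2.sub h3
      exact he.mul hin
    have hdiff : Differentiable ℝ
        (fun z => Real.exp z * (f1 z + c1 - (f z + c0 + c1 * z))) :=
      fun z => (hdv z).differentiableAt
    have hderiv : ∀ z, deriv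
        (fun z => Real.exp z * (f1 z + c1 - (f z + c0 + c1 * z))) z = 0 := fun z => by
      rw [(hdv z).deriv]
      linear_combination Real.exp z * (hc z)
    have hconst := is_const_of_deriv_eq_zero hdiff hderiv
    intro z
    have h := hconst z 0
    simp only [Real.exp_zero, one_mul, mul_zero, add_zero, h0, h1] at h
    rw [hf1] at h
    have h' : Real.exp z * (f1 z + c1 - (f z + c0 + c1 * z)) = c1 - c0 := by
      rw [h]; ring
    have := congrArg (· * Real.exp (-z)) h'
    rw [mul_comm (Real.exp z), mul_assoc, ← Real.exp_add, add_neg_cancel,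
      Real.exp_zero, mul_one] at this
    linarith [this]
  -- Step 4: explicit form of f
  have hform : ∀ z : ℝ, f z = (c0 + c1) / 2 * Real.exp z
      + (c0 - c1) / 2 * Real.exp (-z) - c0 - c1 * z := by
    intro z
    have h1' := hu z
    have h2' := hv z
    linarith
  -- Step 5: (c0 + c1) = 0
  have hA : c0 + c1 = 0 := by
    have hG0 : Tendsto (fun z => (f z - α * z) * Real.exp (-z)) atTop (𝓝 0) := by
      apply squeeze_zero_norm' (a := fun z => M * Real.exp (-z))
      · filter_upwards [eventually_ge_atTop (0:ℝ)] with z hz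
        rw [Real.norm_eq_abs, abs_mul, abs_of_pos (Real.exp_pos _)]
        exact mul_le_mul_of_nonneg_right (hM z hz) (Real.exp_pos _).le
      · simpa using Real.tendsto_exp_neg_atTop_nhds_zero.const_mul M
    have hGA : Tendsto (fun z => (f z - α * z) * Real.exp (-z)) atTop
        (𝓝 ((c0 + c1) / 2)) := by
      have heq : ∀ z : ℝ, (f z - α * z) * Real.exp (-z)
          = (c0 + c1) / 2 + (c0 - c1) / 2 * (Real.exp (-z) * Real.exp (-z))
            - c0 * Real.exp (-z) - (c1 + α) * (z * Real.exp (-z)) := by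
        intro z
        rw [hform z]
        have hee : Real.exp z * Real.exp (-z) = 1 := by
          rw [← Real.exp_add, add_neg_cancel, Real.exp_zero]
        linear_combination ((c0 + c1) / 2) * hee
      rw [show (c0 + c1) / 2 = (c0 + c1) / 2 + (c0 - c1) / 2 * 0 - c0 * 0 - (c1 + α) * 0 by
        ring]
      simp only [heq]
      have t1 : Tendsto (fun z : ℝ => Real.exp (-z) * Real.exp (-z)) atTop (𝓝 0) := by
        simpa using Real.tendsto_exp_neg_atTop_nhds_zero.mul
          Real.tendsto_exp_neg_atTop_nhds_zero
      have t2 : Tendsto (fun z : ℝ => z * Real.exp (-z)) atTop (𝓝 0) := by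
        have := Real.tendsto_pow_mul_exp_neg_atTop_nhds_zero 1
        simpa using this
      exact (((tendsto_const_nhds.add (t1.const_mul _)).sub
        (Real.tendsto_exp_neg_atTop_nhds_zero.const_mul c0)).sub (t2.const_mul _))
    have := tendsto_nhds_unique hG0 hGA
    linarith
  -- Step 6: c1 = -α
  have hc1α : c1 = -α := by
    by_contra hne
    have hne' : c1 + α ≠ 0 := fun h => hne (by linarith)
    have hbd : ∀ z : ℝ, 0 ≤ z → |c1 + α| * z ≤ M + |c0 - c1| / 2 + |c0| := by
      intro z hz
      have hfz := hM z hz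
      have hform' : f z - α * z = (c0 - c1) / 2 * Real.exp (-z) - c0 - (c1 + α) * z := by
        rw [hform z, hA]; ring
      have hexp : Real.exp (-z) ≤ 1 := by
        rw [Real.exp_le_one_iff]; linarith
      have habs : |(c1 + α) * z| ≤ |f z - α * z| + |(c0 - c1) / 2 * Real.exp (-z)| + |c0| := by
        have : (c1 + α) * z = -(f z - α * z) + ((c0 - c1) / 2 * Real.exp (-z)) + (-c0) := by
          rw [hform']; ring
        rw [this]
        calc |(-(f z - α * z)) + ((c0 - c1) / 2 * Real.exp (-z)) + (-c0)|
            ≤ |(-(f z - α * z)) + ((c0 - c1) / 2 * Real.exp (-z))| + |(-c0)| := abs_add_le _ _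
          _ ≤ |(-(f z - α * z))| + |((c0 - c1) / 2 * Real.exp (-z))| + |(-c0)| := by
              gcongr; exact abs_add_le _ _
          _ = |f z - α * z| + |(c0 - c1) / 2 * Real.exp (-z)| + |c0| := by
              rw [abs_neg, abs_neg]
      have h2 : |(c0 - c1) / 2 * Real.exp (-z)| ≤ |c0 - c1| / 2 := by
        rw [abs_mul, abs_of_pos (Real.exp_pos _), abs_div]
        calc |c0 - c1| / |(2:ℝ)| * Real.exp (-z) ≤ |c0 - c1| / |(2:ℝ)| * 1 := by
              apply mul_le_mul_of_nonneg_left hexp (by positivity)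
          _ = |c0 - c1| / 2 := by rw [abs_two, mul_one]
      rw [abs_mul, abs_of_nonneg hz] at habs
      linarith
    set C := M + |c0 - c1| / 2 + |c0| with hC
    have hCpos : 0 ≤ C := by positivity
    have hzpos : 0 < (C + 1) / |c1 + α| := by positivity
    have := hbd ((C + 1) / |c1 + α|) hzpos.le
    rw [mul_div_cancel₀ _ (abs_ne_zero.mpr hne')] at this
    linarith
  -- Conclude
  have hc0α : c0 = α := by linarith
  have hfinal : ∀ z : ℝ, f z = α * (Real.exp (-z) + z - 1) := by
    intro z
    rw [hform z, hA, hc0α, hc1α]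
    ring
  refine ⟨hfinal, ?_⟩
  have : Tendsto (fun z : ℝ => α * Real.exp (-z) - α) atTop (𝓝 (-α)) := by
    simpa using (Real.tendsto_exp_neg_atTop_nhds_zero.const_mul α).sub_const α
  apply this.congr'
  filter_upwards with z
  rw [hfinal z]
  ring
end

section
/- Let α, v ∈ ℝ and let f : ℝ → ℝ be a C⁴ function satisfying f''''(w) = f''(w) for every w ∈ ℝ, with f(0) = 0 and f'(0) = −v. If there exists M ≥ 0 such that |f(w) − α·w| ≤ M for all w ≥ 0, then f(w) = (α + v)·(exp(−w) + w − 1) − v·w for all w ∈ ℝ, and consequently f(w) − α·w converges to −(α + v) as w → ∞. -/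
open Real Filter

private lemma const_of_hasDerivAt_zero (g : ℝ → ℝ) (hg : ∀ x, HasDerivAt g 0 x) :
    ∀ x, g x = g 0 := fun x =>
  is_const_of_deriv_eq_zero (fun y => (hg y).differentiableAt)
    (fun y => (hg y).deriv) x 0

/-- Structure lemma: solutions of f'''' = f'' have the explicit form. -/
private lemma structure_lemma (f : ℝ → ℝ) (hf : ContDiff ℝ 4 f)
    (hode : ∀ w : ℝ, iteratedDeriv 4 f w = iteratedDeriv 2 f w) :
    ∃ A B c d : ℝ, (∀ w, f w = A * exp w + B * exp (-w) + c * w + d) ∧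
      deriv f 0 = A - B + c := by
  set u := iteratedDeriv 2 f with hu
  have hudiff : Differentiable ℝ u := hf.differentiable_iteratedDeriv 2 (by norm_num)
  have hu3 : deriv u = iteratedDeriv 3 f := by
    rw [hu, ← iteratedDeriv_succ]
  have hu'diff : Differentiable ℝ (deriv u) := by
    rw [hu3]; exact hf.differentiable_iteratedDeriv 3 (by norm_num)
  have hu'' : ∀ w, deriv (deriv u) w = u w := by
    intro w
    rw [hu3, ← iteratedDeriv_succ]
    exact hode w
  have hDu : ∀ w, HasDerivAt u (deriv u w) w := fun w =>
    (hudiff w).hasDerivAt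
  have hDu' : ∀ w, HasDerivAt (deriv u) (u w) w := fun w => by
    have := (hu'diff w).hasDerivAt
    rwa [hu'' w] at this
  -- Step B : (u' - u) e^w is constant
  set C₁ := deriv u 0 - u 0 with hC₁
  have hp : ∀ w, deriv u w - u w = C₁ * exp (-w) := by
    have hconst := const_of_hasDerivAt_zero (fun w => (deriv u w - u w) * exp w) ?_
    · intro w
      have h := hconst w
      simp only [neg_zero, exp_zero, mul_one] at h
      have : (deriv u w - u w) * exp w * exp (-w) = C₁ * exp (-w) := by
        rw [h, hC₁]
      rwa [mul_assoc, ← exp_add, add_neg_cancel, exp_zero, mul_one] at this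
    · intro w
      have := (((hDu' w).sub (hDu w)).mul (Real.hasDerivAt_exp w))
      exact this.congr_deriv (by rw [Pi.sub_apply]; ring)
  -- Step C : u e^{-w} + (C₁/2) e^{-2w} is constant
  set A := u 0 + C₁ / 2 with hA
  have hu_form : ∀ w, u w = A * exp w - C₁ / 2 * exp (-w) := by
    have hconst := const_of_hasDerivAt_zero
      (fun w => u w * exp (-w) + C₁ / 2 * (exp (-w) * exp (-w))) ?_
    · intro w
      have h := hconst w
      simp only [neg_zero, exp_zero, mul_one] at h
      have h2 : u w * exp (-w) = A - C₁ / 2 * (exp (-w) * exp (-w)) := by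
        rw [hA]; linarith [h]
      have h3 : u w * exp (-w) * exp w = (A - C₁ / 2 * (exp (-w) * exp (-w))) * exp w := by
        rw [h2]
      have hne : exp (-w) * exp w = 1 := by rw [← exp_add, neg_add_cancel, exp_zero]
      calc u w = u w * (exp (-w) * exp w) := by rw [hne, mul_one]
        _ = (A - C₁ / 2 * (exp (-w) * exp (-w))) * exp w := by rw [← mul_assoc, h3]
        _ = A * exp w - C₁ / 2 * (exp (-w) * (exp (-w) * exp w)) := by ring
        _ = A * exp w - C₁ / 2 * exp (-w) := by rw [hne, mul_one]
    · intro w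
      have hexpneg : HasDerivAt (fun w : ℝ => exp (-w)) (-exp (-w)) w := by
        have := (hasDerivAt_neg w).exp
        simpa using this
      have := ((hDu w).mul hexpneg).add
        ((hexpneg.mul hexpneg).const_mul (C₁ / 2))
      exact this.congr_deriv (by linear_combination exp (-w) * hp w)
  -- Step D : f' = A e^w + C₁/2 e^{-w} + c
  have hf1diff : Differentiable ℝ (deriv f) := by
    have := hf.differentiable_iteratedDeriv 1 (by norm_num)
    rwa [iteratedDeriv_one] at this
  have hDf' : ∀ w, HasDerivAt (deriv f) (u w) w := fun w => by
    have h := (hf1diff w).hasDerivAt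
    have : deriv (deriv f) w = u w := by
      rw [hu, iteratedDeriv_succ, iteratedDeriv_one]
    rwa [this] at h
  have hexpneg : ∀ w : ℝ, HasDerivAt (fun w : ℝ => exp (-w)) (-exp (-w)) w := by
    intro w
    have := (hasDerivAt_neg w).exp
    simpa using this
  set c := deriv f 0 - A - C₁ / 2 with hc
  have hf'_form : ∀ w, deriv f w = A * exp w + C₁ / 2 * exp (-w) + c := by
    have hconst := const_of_hasDerivAt_zero
      (fun w => deriv f w - (A * exp w + C₁ / 2 * exp (-w))) ?_
    · intro w
      have h := hconst w
      simp only [neg_zero, exp_zero, mul_one] at h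
      rw [hc]; linarith [h]
    · intro w
      have := (hDf' w).sub
        (((Real.hasDerivAt_exp w).const_mul A).add ((hexpneg w).const_mul (C₁ / 2)))
      exact this.congr_deriv (by linear_combination hu_form w)
  -- Step E : f = A e^w - C₁/2 e^{-w} + c w + d
  have hfdiff : Differentiable ℝ f := hf.differentiable (by norm_num)
  set d := f 0 - A + C₁ / 2 with hd
  have hf_form : ∀ w, f w = A * exp w + (-(C₁ / 2)) * exp (-w) + c * w + d := by
    have hconst := const_of_hasDerivAt_zero
      (fun w => f w - (A * exp w - C₁ / 2 * exp (-w) + c * w)) ?_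
    · intro w
      have h := hconst w
      simp only [neg_zero, exp_zero, mul_one, mul_zero] at h
      rw [hd]; linarith [h]
    · intro w
      have := ((hfdiff w).hasDerivAt).sub
        ((((Real.hasDerivAt_exp w).const_mul A).sub ((hexpneg w).const_mul (C₁ / 2))).add
          ((hasDerivAt_id w).const_mul c))
      exact this.congr_deriv (by linear_combination hf'_form w)
  exact ⟨A, -(C₁ / 2), c, d, hf_form, by rw [hc]; ring⟩

/-- First-order matching at x = 1: a C⁴ solution of f'''' = f'' with f(0) = 0,
    f'(0) = -v such that f(w) - α·w is bounded on [0, ∞) equals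
    (α + v)·(e^{-w} + w - 1) - v·w, and f(w) - α·w → -(α + v) as w → ∞. -/
theorem stmt_6 (α v : ℝ) (f : ℝ → ℝ) (hf : ContDiff ℝ 4 f)
    (hode : ∀ w : ℝ, iteratedDeriv 4 f w = iteratedDeriv 2 f w)
    (h0 : f 0 = 0) (h1 : deriv f 0 = -v)
    (hbdd : ∃ M : ℝ, 0 ≤ M ∧ ∀ w : ℝ, 0 ≤ w → |f w - α * w| ≤ M) :
    (∀ w : ℝ, f w = (α + v) * (Real.exp (-w) + w - 1) - v * w) ∧
      Filter.Tendsto (fun w => f w - α * w) Filter.atTop (nhds (-(α + v))) := by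
  obtain ⟨A, B, c, d, hform, hderiv0⟩ := structure_lemma f hf hode
  obtain ⟨M, hM0, hM⟩ := hbdd
  have hf0 : A + B + d = 0 := by
    have := hform 0; simp at this; linarith
  have hd1 : A - B + c = -v := by rw [← hderiv0, h1]
  have hexp0 : Tendsto (fun w : ℝ => exp (-w)) atTop (nhds 0) :=
    tendsto_exp_neg_atTop_nhds_zero
  have hwexp : Tendsto (fun w : ℝ => w * exp (-w)) atTop (nhds 0) := by
    have := tendsto_pow_mul_exp_neg_atTop_nhds_zero 1
    simpa using this
  have hinv : Tendsto (fun w : ℝ => w⁻¹) atTop (nhds 0) := tendsto_inv_atTop_zero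
  -- A = 0
  have hA : A = 0 := by
    have hlim1 : Tendsto (fun w => (f w - α * w) * exp (-w)) atTop (nhds 0) := by
      apply squeeze_zero_norm' (a := fun w => M * exp (-w))
      · filter_upwards [eventually_ge_atTop (0 : ℝ)] with w hw
        rw [norm_mul, Real.norm_eq_abs, Real.norm_eq_abs, abs_exp]
        exact mul_le_mul_of_nonneg_right (hM w hw) (exp_nonneg _)
      · simpa using hexp0.const_mul M
    have key : ∀ w : ℝ, (f w - α * w) * exp (-w)
        = A + (B * (exp (-w) * exp (-w)) + ((c - α) * (w * exp (-w)) + d * exp (-w))) := by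
      intro w
      rw [hform w]
      have hne : exp w * exp (-w) = 1 := by rw [← exp_add, add_neg_cancel, exp_zero]
      calc (A * exp w + B * exp (-w) + c * w + d - α * w) * exp (-w)
          = A * (exp w * exp (-w)) + (B * (exp (-w) * exp (-w))
            + ((c - α) * (w * exp (-w)) + d * exp (-w))) := by ring
        _ = _ := by rw [hne]; ring
    have hlim2 : Tendsto (fun w => (f w - α * w) * exp (-w)) atTop (nhds A) := by
      have h : Tendsto (fun w : ℝ => A + (B * (exp (-w) * exp (-w))
          + ((c - α) * (w * exp (-w)) + d * exp (-w)))) atTop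
          (nhds (A + (B * (0 * 0) + ((c - α) * 0 + d * 0)))) :=
        tendsto_const_nhds.add (((hexp0.mul hexp0).const_mul B).add
          ((hwexp.const_mul (c - α)).add (hexp0.const_mul d)))
      simp only [mul_zero, add_zero] at h
      exact h.congr (fun w => (key w).symm)
    exact tendsto_nhds_unique hlim2 hlim1
  -- c = α
  have hc : c = α := by
    have hlim1 : Tendsto (fun w => (f w - α * w) * w⁻¹) atTop (nhds 0) := by
      apply squeeze_zero_norm' (a := fun w => M * w⁻¹)
      · filter_upwards [eventually_ge_atTop (1 : ℝ)] with w hw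
        have hw0 : (0 : ℝ) < w := lt_of_lt_of_le one_pos hw
        rw [norm_mul, Real.norm_eq_abs, Real.norm_eq_abs, abs_inv, abs_of_pos hw0]
        exact mul_le_mul_of_nonneg_right (hM w hw0.le) (by positivity)
      · simpa using hinv.const_mul M
    have hlim2 : Tendsto (fun w => (f w - α * w) * w⁻¹) atTop (nhds (c - α)) := by
      have h : Tendsto (fun w : ℝ => (B * (exp (-w) * w⁻¹) + d * w⁻¹) + (c - α)) atTop
          (nhds ((B * (0 * 0) + d * 0) + (c - α))) :=
        (((hexp0.mul hinv).const_mul B).add (hinv.const_mul d)).add tendsto_const_nhds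
      simp only [mul_zero, add_zero, zero_add] at h
      apply h.congr'
      filter_upwards [eventually_gt_atTop (0 : ℝ)] with w hw
      rw [hform w, hA]
      field_simp
      ring
    have := tendsto_nhds_unique hlim2 hlim1
    linarith
  -- solve for B, d
  have hB : B = α + v := by rw [hA, hc] at hd1; linarith
  have hd : d = -(α + v) := by rw [hA, hB] at hf0; linarith
  constructor
  · intro w
    rw [hform w, hA, hB, hc, hd]
    ring
  · have key : ∀ w : ℝ, f w - α * w = (α + v) * exp (-w) + (-(α + v)) := by
      intro w
      rw [hform w, hA, hB, hc, hd]
      ring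
    have h : Tendsto (fun w : ℝ => (α + v) * exp (-w) + (-(α + v))) atTop
        (nhds ((α + v) * 0 + (-(α + v)))) :=
      (hexp0.const_mul (α + v)).add tendsto_const_nhds
    simp only [mul_zero, zero_add] at h
    exact h.congr (fun w => (key w).symm)
end

section
/- Let α, γ ∈ ℝ and let f : ℝ → ℝ be a C⁴ function satisfying f''''(z) = f''(z) for every z ∈ ℝ, with f(0) = 0 and f'(0) = 0. If there exists M ≥ 0 such that |f(z) − (γ·z²/2 + α·z)| ≤ M for all z ≥ 0, then γ = 0 and f(z) = α·(exp(−z) + z − 1) for all z ∈ ℝ. -/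
open Real Filter Topology


/-- Second-order matching at x = 0: a clamped C⁴ solution of f'''' = f'' such that
    f(z) - (γ·z²/2 + α·z) is bounded on [0, ∞) forces γ = 0 and
    f(z) = α·(e^{-z} + z - 1). -/
theorem stmt_8 (α γ : ℝ) (f : ℝ → ℝ) (hf : ContDiff ℝ 4 f)
    (hode : ∀ z : ℝ, iteratedDeriv 4 f z = iteratedDeriv 2 f z)
    (h0 : f 0 = 0) (h1 : deriv f 0 = 0)
    (hbdd : ∃ M : ℝ, 0 ≤ M ∧ ∀ z : ℝ, 0 ≤ z → |f z - (γ * z ^ 2 / 2 + α * z)| ≤ M) :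
    γ = 0 ∧ ∀ z : ℝ, f z = α * (Real.exp (-z) + z - 1) := by
  have h40 : ContDiff ℝ ((4:ℕ):WithTop ℕ∞) f := by exact_mod_cast hf
  have hd0 : Differentiable ℝ f := h40.differentiable (by norm_cast)
  have hD1 : ContDiff ℝ ((3:ℕ):WithTop ℕ∞) (deriv^[1] f) := by
    exact_mod_cast ContDiff.iterate_deriv' 3 1 (by exact_mod_cast hf)
  have hD2 : ContDiff ℝ ((2:ℕ):WithTop ℕ∞) (deriv^[2] f) := by
    exact_mod_cast ContDiff.iterate_deriv' 2 2 (by exact_mod_cast hf)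
  have hD3 : ContDiff ℝ ((1:ℕ):WithTop ℕ∞) (deriv^[3] f) := by
    exact_mod_cast ContDiff.iterate_deriv' 1 3 (by exact_mod_cast hf)
  set f1 := deriv f with hf1
  set f2 := deriv f1 with hf2
  set f3 := deriv f2 with hf3
  set f4 := deriv f3 with hf4
  have e1 : deriv^[1] f = f1 := rfl
  have e2 : deriv^[2] f = f2 := rfl
  have e3 : deriv^[3] f = f3 := rfl
  have hd1 : Differentiable ℝ f1 := by rw [← e1]; exact hD1.differentiable (by norm_cast)
  have hd2 : Differentiable ℝ f2 := by rw [← e2]; exact hD2.differentiable (by norm_cast)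
  have hd3 : Differentiable ℝ f3 := by rw [← e3]; exact hD3.differentiable (by norm_cast)
  have hode' : ∀ z, f4 z = f2 z := by
    intro z
    have := hode z
    rwa [show (4:ℕ) = 3+1 from rfl, iteratedDeriv_succ,
      show (3:ℕ) = 2+1 from rfl, iteratedDeriv_succ,
      show (2:ℕ) = 1+1 from rfl, iteratedDeriv_succ, iteratedDeriv_succ,
      iteratedDeriv_zero] at this
  set c := f3 0 with hc
  set d := f2 0 with hd
  -- Step 1: f3 - f1 = c
  have L1 : ∀ z, f3 z - f1 z = c := by
    intro z
    have : ∀ x, deriv (fun x => f3 x - f1 x) x = 0 := by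
      intro x
      rw [deriv_fun_sub (hd3 x) (hd1 x)]
      have : deriv f1 x = f2 x := rfl
      rw [← hf4, ← hf2, hode']
      ring
    have := is_const_of_deriv_eq_zero ((hd3).sub hd1) this z 0
    simpa [h1] using this
  -- Step 2: f2 - f = c z + d
  have L2 : ∀ z, f2 z = f z + c * z + d := by
    intro z
    have hdg : Differentiable ℝ (fun x => f2 x - f x - c * x) :=
      (hd2.sub hd0).sub (differentiable_const c |>.mul differentiable_id)
    have : ∀ x, deriv (fun x => f2 x - f x - c * x) x = 0 := by
      intro x
      have hx : HasDerivAt (fun x => f2 x - f x - c * x) (f3 x - f1 x - c) x := by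
        exact (((hd2 x).hasDerivAt).sub ((hd0 x).hasDerivAt)).sub
          (((hasDerivAt_id x).const_mul c).congr_deriv (by ring))
      rw [hx.deriv, L1 x]; ring
    have := is_const_of_deriv_eq_zero hdg this z 0
    simp only [h0, mul_zero, sub_zero] at this
    linarith [this]
  -- Step 3: ψ = (f1 z + c - (f z + c z + d)) * e^z is constant = c - d
  have L3 : ∀ z, f1 z + c - (f z + c * z + d) = (c - d) * Real.exp (-z) := by
    intro z
    set g := fun x => (f1 x + c - (f x + c * x + d)) * Real.exp x with hg
    have hdgin : Differentiable ℝ (fun x => f1 x + c - (f x + c * x + d)) := by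
      fun_prop
    have hderiv : ∀ x, deriv g x = 0 := by
      intro x
      have hin : HasDerivAt (fun x => f1 x + c - (f x + c * x + d))
          (f2 x - (f1 x + c)) x := by
        have h1' : HasDerivAt (fun x => f1 x + c) (f2 x) x := by
          exact ((hd1 x).hasDerivAt).add_const c
        have h2' : HasDerivAt (fun x => f x + c * x + d) (f1 x + c) x := by
          have := (((hd0 x).hasDerivAt).add (((hasDerivAt_id x).const_mul c))).add_const d
          simpa using this
        exact h1'.sub h2'
      have : HasDerivAt g ((f2 x - (f1 x + c)) * Real.exp x
          + (f1 x + c - (f x + c * x + d)) * Real.exp x) x :=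
        hin.mul (Real.hasDerivAt_exp x)
      rw [this.deriv, L2 x]; ring
    have hdg : Differentiable ℝ g := hdgin.mul Real.differentiable_exp
    have := is_const_of_deriv_eq_zero hdg hderiv z 0
    simp only [hg, h0, h1, Real.exp_zero, mul_zero, mul_one, zero_add, add_zero, zero_sub] at this
    -- this : (f1 z + c - (f z + c*z + d)) * exp z = c - d  (after simp at 0)
    have hz : (f1 z + c - (f z + c * z + d)) * Real.exp z = c - d := by linarith [this]
    have := congrArg (· * Real.exp (-z)) hz
    simp only [mul_assoc, ← Real.exp_add] at this
    simpa using this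
  -- Step 4: χ = (f1 z + c + (f z + c z + d)) * e^{-z} constant = c + d
  have L4 : ∀ z, f1 z + c + (f z + c * z + d) = (c + d) * Real.exp z := by
    intro z
    set g := fun x => (f1 x + c + (f x + c * x + d)) * Real.exp (-x) with hg
    have hderiv : ∀ x, deriv g x = 0 := by
      intro x
      have hin : HasDerivAt (fun x => f1 x + c + (f x + c * x + d))
          (f2 x + (f1 x + c)) x := by
        have h1' : HasDerivAt (fun x => f1 x + c) (f2 x) x := by
          exact ((hd1 x).hasDerivAt).add_const c
        have h2' : HasDerivAt (fun x => f x + c * x + d) (f1 x + c) x := by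
          have := (((hd0 x).hasDerivAt).add (((hasDerivAt_id x).const_mul c))).add_const d
          simpa using this
        exact h1'.add h2'
      have hexp : HasDerivAt (fun x : ℝ => Real.exp (-x)) (-Real.exp (-x)) x := by
        exact ((Real.hasDerivAt_exp (-x)).comp x ((hasDerivAt_id x).neg)).congr_deriv (by simp)
      have : HasDerivAt g ((f2 x + (f1 x + c)) * Real.exp (-x)
          + (f1 x + c + (f x + c * x + d)) * (-Real.exp (-x))) x := hin.mul hexp
      rw [this.deriv, L2 x]; ring
    have hdg : Differentiable ℝ g := by
      apply Differentiable.mul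
      · fun_prop
      · fun_prop
    have := is_const_of_deriv_eq_zero hdg hderiv z 0
    simp only [hg, h0, h1, neg_zero, Real.exp_zero, mul_zero, mul_one, zero_add, add_zero] at this
    have hz : (f1 z + c + (f z + c * z + d)) * Real.exp (-z) = c + d := by linarith [this]
    have := congrArg (· * Real.exp z) hz
    simp only [mul_assoc, ← Real.exp_add] at this
    simpa using this
  -- Closed form
  have formF : ∀ z, f z = (c + d)/2 * Real.exp z + (d - c)/2 * Real.exp (-z) - c * z - d := by
    intro z
    have h3 := L3 z
    have h4 := L4 z
    nlinarith [h3, h4]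
  obtain ⟨M, hM0, hM⟩ := hbdd
  set A := (c + d)/2 with hA
  set B := (d - c)/2 with hB
  -- G z = f z - (γ z²/2 + α z)
  set G := fun z => f z - (γ * z ^ 2 / 2 + α * z) with hG
  have formG : ∀ z, G z = A * Real.exp z + B * Real.exp (-z) - γ * z^2/2 - (c + α) * z - d := by
    intro z; simp only [hG]; rw [formF z]; ring
  -- Limit 1: G z * exp (-z) → A
  have lim1 : Tendsto (fun z => G z * Real.exp (-z)) atTop (𝓝 A) := by
    have h1' : Tendsto (fun z : ℝ => A + B * (Real.exp (-z) * Real.exp (-z))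
        - γ/2 * (z^2 * Real.exp (-z)) - (c + α) * (z * Real.exp (-z)) - d * Real.exp (-z))
        atTop (𝓝 (A + B * (0*0) - γ/2 * 0 - (c+α) * 0 - d * 0)) := by
      have he : Tendsto (fun z : ℝ => Real.exp (-z)) atTop (𝓝 0) :=
        Real.tendsto_exp_neg_atTop_nhds_zero
      have hp2 : Tendsto (fun z : ℝ => z^2 * Real.exp (-z)) atTop (𝓝 0) :=
        tendsto_pow_mul_exp_neg_atTop_nhds_zero 2
      have hp1 : Tendsto (fun z : ℝ => z * Real.exp (-z)) atTop (𝓝 0) := by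
        simpa using tendsto_pow_mul_exp_neg_atTop_nhds_zero 1
      exact ((((tendsto_const_nhds.add (tendsto_const_nhds.mul (he.mul he))).sub
        (tendsto_const_nhds.mul hp2)).sub (tendsto_const_nhds.mul hp1)).sub
        (tendsto_const_nhds.mul he))
    have : (fun z => G z * Real.exp (-z)) = fun z : ℝ => A + B * (Real.exp (-z) * Real.exp (-z))
        - γ/2 * (z^2 * Real.exp (-z)) - (c + α) * (z * Real.exp (-z)) - d * Real.exp (-z) := by
      funext z
      rw [formG z]
      have hz1 : Real.exp z * Real.exp (-z) = 1 := by rw [← Real.exp_add]; simp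
      linear_combination A * hz1
    rw [this]
    simpa using h1'
  -- But G is bounded on [0,∞), so G z * exp(-z) → 0
  have lim1' : Tendsto (fun z => G z * Real.exp (-z)) atTop (𝓝 0) := by
    have hb : Tendsto (fun z : ℝ => M * Real.exp (-z)) atTop (𝓝 0) := by
      simpa using tendsto_const_nhds.mul Real.tendsto_exp_neg_atTop_nhds_zero
    refine squeeze_zero_norm' ?_ hb
    filter_upwards [eventually_ge_atTop (0:ℝ)] with z hz
    have := hM z hz
    rw [Real.norm_eq_abs, abs_mul, abs_of_pos (Real.exp_pos _)]
    exact mul_le_mul_of_nonneg_right this (Real.exp_pos _).le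
  have hA0 : A = 0 := tendsto_nhds_unique lim1 lim1'
  -- Limit 2: G z / z² → -γ/2
  have hinv : Tendsto (fun z : ℝ => z⁻¹) atTop (𝓝 0) := tendsto_inv_atTop_zero
  have lim2 : Tendsto (fun z => G z / z^2) atTop (𝓝 (-(γ/2))) := by
    have key : Tendsto (fun z : ℝ => B * (Real.exp (-z) * (z⁻¹ * z⁻¹)) - γ/2
        - (c + α) * z⁻¹ - d * (z⁻¹ * z⁻¹)) atTop
        (𝓝 (B * (0 * (0*0)) - γ/2 - (c+α)*0 - d * (0*0))) := by
      exact (((tendsto_const_nhds.mul (Real.tendsto_exp_neg_atTop_nhds_zero.mul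
        (hinv.mul hinv))).sub tendsto_const_nhds).sub (tendsto_const_nhds.mul hinv)).sub
        (tendsto_const_nhds.mul (hinv.mul hinv))
    have : (fun z : ℝ => B * (Real.exp (-z) * (z⁻¹ * z⁻¹)) - γ/2
        - (c + α) * z⁻¹ - d * (z⁻¹ * z⁻¹)) =ᶠ[atTop] fun z => G z / z^2 := by
      filter_upwards [eventually_gt_atTop (0:ℝ)] with z hz
      rw [formG z, hA0]
      field_simp
      ring
    have := key.congr' this
    simpa using this
  have lim2' : Tendsto (fun z => G z / z^2) atTop (𝓝 0) := by
    have hb : Tendsto (fun z : ℝ => M * (z⁻¹ * z⁻¹)) atTop (𝓝 0) := by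
      simpa using tendsto_const_nhds.mul (hinv.mul hinv)
    refine squeeze_zero_norm' ?_ hb
    filter_upwards [eventually_gt_atTop (0:ℝ)] with z hz
    have := hM z hz.le
    rw [Real.norm_eq_abs, abs_div, abs_of_pos (by positivity : (0:ℝ) < z^2)]
    rw [div_le_iff₀ (by positivity)]
    calc |G z| ≤ M := this
      _ = M * (z⁻¹ * z⁻¹) * z^2 := by field_simp
  have hγ : γ = 0 := by
    have := tendsto_nhds_unique lim2 lim2'
    linarith
  -- Limit 3: G z / z → -(c+α)
  have lim3 : Tendsto (fun z => G z / z) atTop (𝓝 (-(c + α))) := by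
    have key : Tendsto (fun z : ℝ => B * (Real.exp (-z) * z⁻¹) - (c + α)
        - d * z⁻¹) atTop (𝓝 (B * (0 * 0) - (c+α) - d * 0)) := by
      exact ((tendsto_const_nhds.mul (Real.tendsto_exp_neg_atTop_nhds_zero.mul hinv)).sub
        tendsto_const_nhds).sub (tendsto_const_nhds.mul hinv)
    have : (fun z : ℝ => B * (Real.exp (-z) * z⁻¹) - (c + α) - d * z⁻¹)
        =ᶠ[atTop] fun z => G z / z := by
      filter_upwards [eventually_gt_atTop (0:ℝ)] with z hz
      rw [formG z, hA0, hγ]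
      field_simp
      ring
    have := key.congr' this
    simpa using this
  have lim3' : Tendsto (fun z => G z / z) atTop (𝓝 0) := by
    have hb : Tendsto (fun z : ℝ => M * z⁻¹) atTop (𝓝 0) := by
      simpa using tendsto_const_nhds.mul hinv
    refine squeeze_zero_norm' ?_ hb
    filter_upwards [eventually_gt_atTop (0:ℝ)] with z hz
    have := hM z hz.le
    rw [Real.norm_eq_abs, abs_div, abs_of_pos hz]
    rw [div_le_iff₀ hz]
    calc |G z| ≤ M := this
      _ = M * z⁻¹ * z := by field_simp
  have hcα : c + α = 0 := by
    have := tendsto_nhds_unique lim3 lim3'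
    linarith
  have hc' : c = -α := by linarith
  have hd' : d = α := by
    have : (c + d)/2 = 0 := hA0
    linarith
  refine ⟨hγ, fun z => ?_⟩
  rw [formF z, hA0, hB, hc', hd']
  ring
end
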